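/- If G is a graph and H = G + {(u,v)} is obtained from G by adding or deleting a single edge (u,v), then the number of critical cliques of H is at most the number of critical cliques of G plus 4. -/

import Mathlib

open SimpleGraph

/-- `K` is a clique which is a module of `G`. -/
def IsCliqueModule {V : Type*} (G : SimpleGraph V) (K : Set V) : Prop :=
  G.IsClique K ∧ ∀ x ∈ K, ∀ y ∈ K, ∀ z ∉ K, (G.Adj x z ↔ G.Adj y z)

/-- A critical clique of `G`: a maximal clique module. -/
def IsCriticalClique {V : Type*} (G : SimpleGraph V) (K : Set V) : Prop :=
  K.Nonempty ∧ IsCliqueModule G K ∧ ∀ K', IsCliqueModule G K' → K ⊆ K' → K' = K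

/-- The graph `G + F` obtained from `G` by toggling (adding or deleting) the pairs in `F`:
its edge set is the symmetric difference of `E(G)` and `F`. -/
def editGraph {V : Type*} (G : SimpleGraph V) (F : Set (Sym2 V)) : SimpleGraph V where
  Adj u v := u ≠ v ∧ ((G.Adj u v ∧ s(u, v) ∉ F) ∨ (¬ G.Adj u v ∧ s(u, v) ∈ F))
  symm := by
    constructor
    intro u v h
    refine ⟨h.1.symm, ?_⟩
    rw [Sym2.eq_swap]
    rcases h.2 with ⟨h1, h2⟩ | ⟨h1, h2⟩
    · exact Or.inl ⟨h1.symm, h2⟩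
    · exact Or.inr ⟨fun hh => h1 hh.symm, h2⟩
  loopless := ⟨fun u h => h.1 rfl⟩

section Aux

variable {V : Type*}

/-- Closed neighborhood of `x`. -/
def cnbr (G : SimpleGraph V) (x : V) : Set V := {z | G.Adj x z ∨ x = z}

/-- The "closed neighborhood class" of `x`. -/
def cls (G : SimpleGraph V) (x : V) : Set V := {y | cnbr G y = cnbr G x}

lemma mem_cls_self (G : SimpleGraph V) (x : V) : x ∈ cls G x := rfl

lemma cls_eq_of_mem {G : SimpleGraph V} {x y : V} (h : y ∈ cls G x) : cls G y = cls G x := by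
  have hy : cnbr G y = cnbr G x := h
  ext z
  simp only [cls, Set.mem_setOf_eq, hy]

lemma cliqueModule_cls (G : SimpleGraph V) (x : V) : IsCliqueModule G (cls G x) := by
  constructor
  · intro a ha b hb hab
    have hmem : a ∈ cnbr G b := by
      have : cnbr G b = cnbr G a := by
        rw [show cnbr G b = cnbr G x from hb, show cnbr G a = cnbr G x from ha]
      rw [this]
      exact Or.inr rfl
    rcases hmem with h | h
    · exact h.symm
    · exact absurd h.symm hab
  · intro a ha b hb w hw
    have haw : a ≠ w := fun h => hw (h ▸ ha)
    have hbw : b ≠ w := fun h => hw (h ▸ hb)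
    have hab : cnbr G a = cnbr G b := by
      rw [show cnbr G a = cnbr G x from ha, show cnbr G b = cnbr G x from hb]
    constructor
    · intro h
      have : w ∈ cnbr G b := hab ▸ (Or.inl h : w ∈ cnbr G a)
      rcases this with h' | h'
      · exact h'
      · exact absurd h' hbw
    · intro h
      have : w ∈ cnbr G a := hab ▸ (Or.inl h : w ∈ cnbr G b)
      rcases this with h' | h'
      · exact h'
      · exact absurd h' haw

lemma subset_cls {G : SimpleGraph V} {K : Set V} (hK : IsCliqueModule G K) {x : V}
    (hx : x ∈ K) : K ⊆ cls G x := by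
  intro y hy
  show cnbr G y = cnbr G x
  ext z
  by_cases hz : z ∈ K
  · constructor <;> intro _
    · rcases eq_or_ne x z with rfl | h
      · exact Or.inr rfl
      · exact Or.inl (hK.1 hx hz h)
    · rcases eq_or_ne y z with rfl | h
      · exact Or.inr rfl
      · exact Or.inl (hK.1 hy hz h)
  · have h1 : y ≠ z := fun h => hz (h ▸ hy)
    have h2 : x ≠ z := fun h => hz (h ▸ hx)
    have hmod := hK.2 y hy x hx z hz
    simp only [cnbr, Set.mem_setOf_eq, h1, h2, or_false]
    exact hmod

lemma crit_iff {G : SimpleGraph V} {K : Set V} :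
    IsCriticalClique G K ↔ ∃ x, K = cls G x := by
  constructor
  · rintro ⟨⟨x, hx⟩, hm, hmax⟩
    exact ⟨x, (hmax (cls G x) (cliqueModule_cls G x) (subset_cls hm hx)).symm⟩
  · rintro ⟨x, rfl⟩
    refine ⟨⟨x, mem_cls_self G x⟩, cliqueModule_cls G x, fun K' hK' hsub => ?_⟩
    exact le_antisymm (subset_cls hK' (hsub (mem_cls_self G x))) hsub

lemma cnbr_edit {G : SimpleGraph V} {u v x : V} (hu : x ≠ u) (hv : x ≠ v) :
    cnbr (editGraph G {s(u, v)}) x = cnbr G x := by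
  ext z
  have hne : s(x, z) ≠ s(u, v) := by
    intro h
    rcases Sym2.eq_iff.mp h with ⟨rfl, rfl⟩ | ⟨rfl, rfl⟩
    · exact hu rfl
    · exact hv rfl
  show ((x ≠ z ∧ ((G.Adj x z ∧ s(x, z) ∉ ({s(u, v)} : Set (Sym2 V))) ∨
      (¬ G.Adj x z ∧ s(x, z) ∈ ({s(u, v)} : Set (Sym2 V))))) ∨ x = z) ↔ (G.Adj x z ∨ x = z)
  simp only [Set.mem_singleton_iff, hne, not_false_eq_true, and_true, false_and, or_false,
    and_false]
  constructor
  · rintro (⟨-, h⟩ | h)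
    · exact Or.inl h
    · exact Or.inr h
  · rintro (h | h)
    · exact Or.inl ⟨h.ne, h⟩
    · exact Or.inr h

end Aux

theorem criticalClique_count_le_of_single_edit {V : Type*} [Fintype V]
    (G : SimpleGraph V) (u v : V) (huv : u ≠ v) :
    {K : Set V | IsCriticalClique (editGraph G {s(u, v)}) K}.ncard ≤
      {K : Set V | IsCriticalClique G K}.ncard + 4 := by
  classical
  set H := editGraph G {s(u, v)} with hH
  have hset : ∀ G' : SimpleGraph V,
      {K : Set V | IsCriticalClique G' K} = Set.range (cls G') := by
    intro G'
    ext K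
    simp only [Set.mem_setOf_eq, Set.mem_range, crit_iff, eq_comm]
  rw [hset, hset]
  have hsplit : Set.range (cls H) = cls H '' {u, v} ∪ cls H '' ({u, v} : Set V)ᶜ := by
    rw [← Set.image_union, Set.union_compl_self, Set.image_univ]
  rw [hsplit]
  have h1 : (cls H '' {u, v}).ncard ≤ 2 := by
    calc (cls H '' {u, v}).ncard ≤ ({u, v} : Set V).ncard :=
          Set.ncard_image_le (Set.toFinite _)
      _ = 2 := Set.ncard_pair huv
  have h2 : (cls H '' ({u, v} : Set V)ᶜ).ncard ≤ (Set.range (cls G)).ncard := by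
    apply Set.ncard_le_ncard_of_injOn
      (fun K => if h : (K \ {u, v}).Nonempty then cls G h.choose else ∅)
    · rintro K ⟨x, hx, rfl⟩
      have hne : ((cls H x \ {u, v}).Nonempty) := ⟨x, mem_cls_self H x, hx⟩
      simp only [dif_pos hne]
      exact ⟨_, rfl⟩
    · rintro K1 ⟨x, hx, rfl⟩ K2 ⟨y, hy, rfl⟩ heq
      have hne1 : ((cls H x \ {u, v}).Nonempty) := ⟨x, mem_cls_self H x, hx⟩
      have hne2 : ((cls H y \ {u, v}).Nonempty) := ⟨y, mem_cls_self H y, hy⟩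
      simp only [dif_pos hne1, dif_pos hne2] at heq
      obtain ⟨ha, hanot⟩ := hne1.choose_spec
      obtain ⟨hb, hbnot⟩ := hne2.choose_spec
      set a := hne1.choose
      set b := hne2.choose
      have hau : a ≠ u := fun h => hanot (by simp [h])
      have hav : a ≠ v := fun h => hanot (by simp [h])
      have hbu : b ≠ u := fun h => hbnot (by simp [h])
      have hbv : b ≠ v := fun h => hbnot (by simp [h])
      -- from cls G a = cls G b get cnbr G b = cnbr G a
      have hG : cnbr G b = cnbr G a := by
        have hmem : b ∈ cls G a := by rw [heq]; exact mem_cls_self G b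
        exact hmem
      have hHab : cnbr H b = cnbr H a := by
        rw [hH, cnbr_edit hbu hbv, cnbr_edit hau hav]
        exact hG
      have : b ∈ cls H a := hHab
      calc cls H x = cls H a := (cls_eq_of_mem ha).symm
        _ = cls H b := (cls_eq_of_mem this).symm
        _ = cls H y := cls_eq_of_mem hb
  calc (cls H '' {u, v} ∪ cls H '' ({u, v} : Set V)ᶜ).ncard
      ≤ (cls H '' {u, v}).ncard + (cls H '' ({u, v} : Set V)ᶜ).ncard :=
        Set.ncard_union_le _ _
    _ ≤ (Set.range (cls G)).ncard + 4 := by omega
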